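/- If a constant so(4)-valued 2-form B_{μν}^{IJ} on ℝ⁴ satisfies (⋆B)_{μν}^{IJ}N_J = 0 for all μ,ν and some nonzero N ∈ ℝ⁴, then η^{μνρσ}ε_{IJKL}B_{μν}^{IJ}B_{ρσ}^{KL} = 0, i.e. B lies in the degenerate Plebanski sector. -/
import Mathlib


noncomputable section
open scoped BigOperators

/-- Sign of an integer, as a real number. -/
def sgnZ (x : ℤ) : ℝ := if 0 < x then 1 else if x < 0 then -1 else 0

/-- Levi-Civita symbol ε_{IJKL} on ℝ⁴, with ε_{0123} = 1. -/
def eps4 (a b c d : Fin 4) : ℝ :=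
  sgnZ ((b:ℤ) - a) * sgnZ ((c:ℤ) - a) * sgnZ ((d:ℤ) - a) *
  sgnZ ((c:ℤ) - b) * sgnZ ((d:ℤ) - b) * sgnZ ((d:ℤ) - c)

/-- Levi-Civita symbol on indices 1,2,3 (here `Fin 3`). -/
def eps3 (a b c : Fin 3) : ℝ := sgnZ ((b:ℤ) - a) * sgnZ ((c:ℤ) - a) * sgnZ ((c:ℤ) - b)

/-- Antisymmetry of a 4×4 real array. -/
def Antisym (B : Fin 4 → Fin 4 → ℝ) : Prop := ∀ I J, B I J = - B J I

/-- Self-dual part B_+^i = (1/4) ε^i_{jk} B^{jk} + (1/2) B^{0i}. -/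
def Bplus (B : Fin 4 → Fin 4 → ℝ) (i : Fin 3) : ℝ :=
  (1/4) * ∑ j, ∑ k, eps3 i j k * B j.succ k.succ + (1/2) * B 0 i.succ

/-- Anti-self-dual part B_-^i = (1/4) ε^i_{jk} B^{jk} - (1/2) B^{0i}. -/
def Bminus (B : Fin 4 → Fin 4 → ℝ) (i : Fin 3) : ℝ :=
  (1/4) * ∑ j, ∑ k, eps3 i j k * B j.succ k.succ - (1/2) * B 0 i.succ

/-- Hodge dual (⋆B)^{IJ} = (1/2) ε^{IJ}_{KL} B^{KL} (Euclidean metric). -/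
def hodge (B : Fin 4 → Fin 4 → ℝ) (I J : Fin 4) : ℝ :=
  (1/2) * ∑ K, ∑ L, eps4 I J K L * B K L

lemma fv0 : ((0:Fin 4):ℕ) = 0 := rfl
lemma fv1 : ((1:Fin 4):ℕ) = 1 := rfl
lemma fv2 : ((2:Fin 4):ℕ) = 2 := rfl
lemma fv3 : ((3:Fin 4):ℕ) = 3 := rfl

set_option maxHeartbeats 2000000 in
/-- Full expansion of the Levi-Civita pairing of two 4×4 arrays. -/
lemma pair_expand (A C : Fin 4 → Fin 4 → ℝ) :
    (∑ I, ∑ J, ∑ K, ∑ L, eps4 I J K L * A I J * C K L) =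
      A 0 1 * C 2 3 - A 0 1 * C 3 2 - A 0 2 * C 1 3 + A 0 2 * C 3 1
      + A 0 3 * C 1 2 - A 0 3 * C 2 1 - A 1 0 * C 2 3 + A 1 0 * C 3 2
      + A 1 2 * C 0 3 - A 1 2 * C 3 0 - A 1 3 * C 0 2 + A 1 3 * C 2 0
      + A 2 0 * C 1 3 - A 2 0 * C 3 1 - A 2 1 * C 0 3 + A 2 1 * C 3 0
      + A 2 3 * C 0 1 - A 2 3 * C 1 0 - A 3 0 * C 1 2 + A 3 0 * C 2 1
      + A 3 1 * C 0 2 - A 3 1 * C 2 0 - A 3 2 * C 0 1 + A 3 2 * C 1 0 := by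
  simp only [eps4, sgnZ, Fin.sum_univ_four, fv0, fv1, fv2, fv3]
  norm_num
  ring

/-- Pfaffian pairing of two antisymmetric matrices annihilating a common nonzero
vector vanishes. Stated in components: `c` and `d` are the independent entries. -/
lemma aux_pf (c01 c02 c03 c12 c13 c23 d01 d02 d03 d12 d13 d23 n0 n1 n2 n3 : ℝ)
    (hn : n0 ≠ 0 ∨ n1 ≠ 0 ∨ n2 ≠ 0 ∨ n3 ≠ 0)
    (h0 : c01*n1 + c02*n2 + c03*n3 = 0)
    (h1 : -c01*n0 + c12*n2 + c13*n3 = 0)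
    (h2 : -c02*n0 - c12*n1 + c23*n3 = 0)
    (h3 : -c03*n0 - c13*n1 - c23*n2 = 0)
    (k0 : d01*n1 + d02*n2 + d03*n3 = 0)
    (k1 : -d01*n0 + d12*n2 + d13*n3 = 0)
    (k2 : -d02*n0 - d12*n1 + d23*n3 = 0)
    (k3 : -d03*n0 - d13*n1 - d23*n2 = 0) :
    c01*d23 - c02*d13 + c03*d12 + c23*d01 - c13*d02 + c12*d03 = 0 := by
  rcases hn with h | h | h | h
  · have key : (c01*d23 - c02*d13 + c03*d12 + c23*d01 - c13*d02 + c12*d03) * n0 = 0 := by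
      linear_combination (-d23)*h1 + d13*h2 + (-d12)*h3 + (-c23)*k1 + c13*k2 + (-c12)*k3
    exact (mul_eq_zero.mp key).resolve_right h
  · have key : (c01*d23 - c02*d13 + c03*d12 + c23*d01 - c13*d02 + c12*d03) * n1 = 0 := by
      linear_combination d23*h0 + (-d03)*h2 + d02*h3 + c23*k0 + (-c03)*k2 + c02*k3
    exact (mul_eq_zero.mp key).resolve_right h
  · have key : (c01*d23 - c02*d13 + c03*d12 + c23*d01 - c13*d02 + c12*d03) * n2 = 0 := by
      linear_combination (-d13)*h0 + d03*h1 + (-d01)*h3 + (-c13)*k0 + c03*k1 + (-c01)*k3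
    exact (mul_eq_zero.mp key).resolve_right h
  · have key : (c01*d23 - c02*d13 + c03*d12 + c23*d01 - c13*d02 + c12*d03) * n3 = 0 := by
      linear_combination d12*h0 + (-d02)*h1 + d01*h2 + c12*k0 + (-c02)*k1 + c01*k2
    exact (mul_eq_zero.mp key).resolve_right h

/-- If a constant so(4)-valued 2-form B_{μν}^{IJ} satisfies (⋆B)_{μν}^{IJ}N_J = 0
for some nonzero N, then η^{μνρσ}ε_{IJKL}B_{μν}^{IJ}B_{ρσ}^{KL} = 0, i.e. B lies
in the degenerate Plebanski sector. -/
theorem degenerate_sector_of_normal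
    (B : Fin 4 → Fin 4 → Fin 4 → Fin 4 → ℝ)
    (hanti_st : ∀ μ ν, Antisym (fun I J => B μ ν I J))
    (hanti_int : ∀ I J μ ν, B μ ν I J = - B ν μ I J)
    (N : Fin 4 → ℝ) (hN : N ≠ 0)
    (hBN : ∀ μ ν I, ∑ J, hodge (B μ ν) I J * N J = 0) :
    ∑ μ, ∑ ν, ∑ ρ, ∑ σ, ∑ I, ∑ J, ∑ K, ∑ L,
      eps4 μ ν ρ σ * eps4 I J K L * B μ ν I J * B ρ σ K L = 0 := by
  have hn : N 0 ≠ 0 ∨ N 1 ≠ 0 ∨ N 2 ≠ 0 ∨ N 3 ≠ 0 := by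
    by_contra h
    push_neg at h
    obtain ⟨h0, h1, h2, h3⟩ := h
    apply hN
    funext i
    fin_cases i <;> assumption
  have key : ∀ μ ν ρ σ : Fin 4,
      (∑ I, ∑ J, ∑ K, ∑ L, eps4 I J K L * B μ ν I J * B ρ σ K L) = 0 := by
    intro μ ν ρ σ
    have a10 : B μ ν 1 0 = -B μ ν 0 1 := hanti_st μ ν 1 0
    have a20 : B μ ν 2 0 = -B μ ν 0 2 := hanti_st μ ν 2 0
    have a30 : B μ ν 3 0 = -B μ ν 0 3 := hanti_st μ ν 3 0
    have a21 : B μ ν 2 1 = -B μ ν 1 2 := hanti_st μ ν 2 1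
    have a31 : B μ ν 3 1 = -B μ ν 1 3 := hanti_st μ ν 3 1
    have a32 : B μ ν 3 2 = -B μ ν 2 3 := hanti_st μ ν 3 2
    have b10 : B ρ σ 1 0 = -B ρ σ 0 1 := hanti_st ρ σ 1 0
    have b20 : B ρ σ 2 0 = -B ρ σ 0 2 := hanti_st ρ σ 2 0
    have b30 : B ρ σ 3 0 = -B ρ σ 0 3 := hanti_st ρ σ 3 0
    have b21 : B ρ σ 2 1 = -B ρ σ 1 2 := hanti_st ρ σ 2 1
    have b31 : B ρ σ 3 1 = -B ρ σ 1 3 := hanti_st ρ σ 3 1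
    have b32 : B ρ σ 3 2 = -B ρ σ 2 3 := hanti_st ρ σ 3 2
    have H0 := hBN μ ν 0
    have H1 := hBN μ ν 1
    have H2 := hBN μ ν 2
    have H3 := hBN μ ν 3
    have K0 := hBN ρ σ 0
    have K1 := hBN ρ σ 1
    have K2 := hBN ρ σ 2
    have K3 := hBN ρ σ 3
    simp only [hodge, eps4, sgnZ, Fin.sum_univ_four, fv0, fv1, fv2, fv3] at H0 H1 H2 H3 K0 K1 K2 K3
    norm_num [a10, a20, a30, a21, a31, a32, b10, b20, b30, b21, b31, b32] at H0 H1 H2 H3 K0 K1 K2 K3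
    have Q := aux_pf (B μ ν 2 3) (-(B μ ν 1 3)) (B μ ν 1 2) (B μ ν 0 3) (-(B μ ν 0 2)) (B μ ν 0 1)
      (B ρ σ 2 3) (-(B ρ σ 1 3)) (B ρ σ 1 2) (B ρ σ 0 3) (-(B ρ σ 0 2)) (B ρ σ 0 1)
      (N 0) (N 1) (N 2) (N 3) hn
      (by linear_combination H0) (by linear_combination H1)
      (by linear_combination H2) (by linear_combination H3)
      (by linear_combination K0) (by linear_combination K1)
      (by linear_combination K2) (by linear_combination K3)
    rw [pair_expand]
    simp only [a10, a20, a30, a21, a31, a32, b10, b20, b30, b21, b31, b32]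
    linear_combination 4 * Q
  have pull : ∀ μ ν ρ σ : Fin 4,
      (∑ I, ∑ J, ∑ K, ∑ L, eps4 μ ν ρ σ * eps4 I J K L * B μ ν I J * B ρ σ K L)
        = eps4 μ ν ρ σ * ∑ I, ∑ J, ∑ K, ∑ L, eps4 I J K L * B μ ν I J * B ρ σ K L := by
    intro μ ν ρ σ
    simp only [Finset.mul_sum, mul_assoc]
  simp only [pull, key, mul_zero, Finset.sum_const_zero]
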